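/- Let σ be a field automorphism of F_q with σ ≠ id, let s be the order of the fixed subfield of σ, and let M be an invertible (n+1)×(n+1) matrix over F_q. If W is an r-dimensional linear subspace of the space of row vectors F_q^{n+1}, then the number of projective points [ξ] with ξ ∈ W nonzero such that ξ·M = λ·ξ^σ for some nonzero λ ∈ F_q is at most (s^r−1)/(s−1). -/

import Mathlib

open Matrix Finset

set_option maxHeartbeats 1000000
set_option synthInstance.maxHeartbeats 400000

theorem core7 {F : Type} [Field F] {n : ℕ} (σ : F ≃+* F)
    (M : Matrix (Fin (n + 1)) (Fin (n + 1)) F)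
    {ι : Type} [Fintype ι] [DecidableEq ι]
    (w : ι → (Fin (n + 1) → F)) (lam : ι → F)
    (hlam0 : ∀ i, lam i ≠ 0)
    (heig : ∀ i, w i ᵥ* M = lam i • fun j => σ (w i j))
    (hsep : ∀ i j, lam i ≠ lam j → ∀ c d : F, c ≠ 0 → d ≠ 0 →
        lam i * (c * σ d) ≠ lam j * (d * σ c))
    (hK : ∀ c : ι → F, (∀ i, σ (c i) = c i) →
        (∀ i j, c i ≠ 0 → c j ≠ 0 → lam i = lam j) →
        ∑ i, c i • w i = 0 → ∀ i, c i = 0) :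
    ∀ c : ι → F, ∑ i, c i • w i = 0 → ∀ i, c i = 0 := by
  classical
  suffices H : ∀ N : ℕ, ∀ c : ι → F, (univ.filter (fun i => c i ≠ 0)).card ≤ N →
      ∑ i, c i • w i = 0 → ∀ i, c i = 0 by
    intro c hc i; exact H _ c le_rfl hc i
  intro N
  induction N with
  | zero =>
    intro c hcard _ i
    by_contra hci
    have : i ∈ univ.filter (fun i => c i ≠ 0) := by simp [hci]
    have := Finset.card_pos.mpr ⟨i, this⟩
    omega
  | succ N ih =>
    intro c hcard hsum
    by_cases hall : ∀ i, c i = 0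
    · exact hall
    exfalso
    push_neg at hall
    obtain ⟨i0, hi0⟩ := hall
    -- derived relation R2 : multiply by M
    have R2 : ∑ i, (c i * lam i) • (fun j => σ (w i j)) = 0 := by
      have h : ∑ i, (c i • w i) ᵥ* M = 0 := by
        have h0 : ∑ i, (c i • w i) ᵥ* M = (∑ i, c i • w i) ᵥ* M :=
          (map_sum M.vecMulLinear (fun i => c i • w i) univ).symm
        rw [h0, hsum, Matrix.zero_vecMul]
      calc ∑ i, (c i * lam i) • (fun j => σ (w i j))
          = ∑ i, (c i • w i) ᵥ* M := by
            refine Finset.sum_congr rfl fun i _ => ?_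
            rw [Matrix.smul_vecMul, heig i, smul_smul]
        _ = 0 := h
    -- apply σ⁻¹ componentwise
    have R' : ∑ i, σ.symm (c i * lam i) • w i = 0 := by
      funext j
      have h2 := congrFun R2 j
      simp only [Finset.sum_apply, Pi.smul_apply, smul_eq_mul, Pi.zero_apply] at h2 ⊢
      have h3 := congrArg σ.symm h2
      simpa [map_sum, _root_.map_mul] using h3
    set dd : ι → F := fun i => c i0 * σ.symm (c i * lam i) - σ.symm (c i0 * lam i0) * c i
      with hdd
    have hdsum : ∑ i, dd i • w i = 0 := by
      have h1 : ∑ i, (c i0 * σ.symm (c i * lam i)) • w i = 0 := by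
        rw [show (∑ i, (c i0 * σ.symm (c i * lam i)) • w i)
            = c i0 • ∑ i, σ.symm (c i * lam i) • w i from by
          rw [Finset.smul_sum]; exact Finset.sum_congr rfl fun i _ => (smul_smul _ _ _).symm]
        rw [R', smul_zero]
      have h2 : ∑ i, (σ.symm (c i0 * lam i0) * c i) • w i = 0 := by
        rw [show (∑ i, (σ.symm (c i0 * lam i0) * c i) • w i)
            = σ.symm (c i0 * lam i0) • ∑ i, c i • w i from by
          rw [Finset.smul_sum]; exact Finset.sum_congr rfl fun i _ => (smul_smul _ _ _).symm]
        rw [hsum, smul_zero]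
      simp only [hdd, sub_smul, Finset.sum_sub_distrib, h1, h2, sub_zero]
    have hdi0 : dd i0 = 0 := by simp [hdd, mul_comm]
    have hd0 : ∀ i, dd i = 0 := by
      refine ih dd ?_ hdsum
      have hsub : univ.filter (fun i => dd i ≠ 0) ⊆ (univ.filter (fun i => c i ≠ 0)).erase i0 := by
        intro i hi
        simp only [mem_filter, mem_univ, true_and] at hi
        rw [Finset.mem_erase]
        refine ⟨?_, ?_⟩
        · rintro rfl; exact hi hdi0
        · simp only [mem_filter, mem_univ, true_and]
          intro hci
          exact hi (by simp [hdd, hci])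
      have hmem : i0 ∈ univ.filter (fun i => c i ≠ 0) := by simp [hi0]
      have := Finset.card_le_card hsub
      rw [Finset.card_erase_of_mem hmem] at this
      omega
    have key : ∀ i, c i ≠ 0 → lam i = lam i0 ∧ σ (c i0) * c i = c i0 * σ (c i) := by
      intro i hci
      have h1 : c i0 * σ.symm (c i * lam i) = σ.symm (c i0 * lam i0) * c i :=
        sub_eq_zero.mp (hd0 i)
      have h2 : σ (c i0) * (c i * lam i) = (c i0 * lam i0) * σ (c i) := by
        have := congrArg σ h1
        simpa [_root_.map_mul] using this
      have hlam : lam i = lam i0 := by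
        by_contra hne
        exact hsep i i0 hne (c i) (c i0) hci hi0 (by linear_combination h2)
      refine ⟨hlam, ?_⟩
      rw [hlam] at h2
      have h3 : (σ (c i0) * c i) * lam i0 = (c i0 * σ (c i)) * lam i0 := by
        linear_combination h2
      exact mul_right_cancel₀ (hlam0 i0) h3
    -- final contradiction via hK
    set c' : ι → F := fun i => (c i0)⁻¹ * c i with hc'
    have hfix : ∀ i, σ (c' i) = c' i := by
      intro i
      by_cases hci : c i = 0
      · simp [hc', hci]
      · have h := (key i hci).2
        have hσ0 : σ (c i0) ≠ 0 := fun h0 => hi0 (σ.injective (by simpa using h0))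
        simp only [hc', _root_.map_mul, map_inv₀]
        field_simp
        linear_combination - h
    have hsame : ∀ i j, c' i ≠ 0 → c' j ≠ 0 → lam i = lam j := by
      intro i j hci hcj
      have hi : c i ≠ 0 := fun h => hci (by simp [hc', h])
      have hj : c j ≠ 0 := fun h => hcj (by simp [hc', h])
      rw [(key i hi).1, (key j hj).1]
    have hsum' : ∑ i, c' i • w i = 0 := by
      rw [show (∑ i, c' i • w i) = (c i0)⁻¹ • ∑ i, c i • w i from by
        rw [Finset.smul_sum]; exact Finset.sum_congr rfl fun i _ => (smul_smul _ _ _).symm]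
      rw [hsum, smul_zero]
    have := hK c' hfix hsame hsum' i0
    simp only [hc'] at this
    rw [inv_mul_cancel₀ hi0] at this
    exact one_ne_zero this

theorem stmt_7 (F : Type) [Field F] [Fintype F] (n : ℕ) (hn : 2 ≤ n)
    (σ : F ≃+* F) (hσ : σ ≠ RingEquiv.refl F)
    (s : ℕ) (hs : s = Nat.card {a : F // σ a = a})
    (M : Matrix (Fin (n + 1)) (Fin (n + 1)) F) (hM : IsUnit M)
    (r : ℕ) (W : Submodule F (Fin (n + 1) → F)) (hW : Module.finrank F W = r) :
    Nat.card {ξ : Projectivization F (Fin (n + 1) → F) //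
        ξ.rep ∈ W ∧ ∃ l : F, l ≠ 0 ∧ ξ.rep ᵥ* M = l • (fun i => σ (ξ.rep i))} ≤
      (s ^ r - 1) / (s - 1) := by
  classical
  -- the fixed subfield
  set K : Subfield F := {
    carrier := {a | σ a = a}
    mul_mem' := by intro a b ha hb; simp only [Set.mem_setOf_eq] at *; rw [_root_.map_mul, ha, hb]
    one_mem' := by simp [Set.mem_setOf_eq]
    add_mem' := by intro a b ha hb; simp only [Set.mem_setOf_eq] at *; rw [map_add, ha, hb]
    zero_mem' := by simp [Set.mem_setOf_eq]
    neg_mem' := by intro a ha; simp only [Set.mem_setOf_eq] at *; rw [map_neg, ha]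
    inv_mem' := by intro a ha; simp only [Set.mem_setOf_eq] at *; rw [map_inv₀, ha] } with hK
  -- the orbit relation on eigenvalues
  set rel : F → F → Prop := fun a b => ∃ c : F, c ≠ 0 ∧ a * c = b * σ c with hrel
  have hσne : ∀ {x : F}, x ≠ 0 → σ x ≠ 0 := by
    intro x hx h0
    exact hx (σ.injective (by simpa using h0))
  have rel_refl : ∀ a, rel a a := fun a => ⟨1, one_ne_zero, by simp⟩
  have rel_symm : ∀ {a b}, rel a b → rel b a := by
    rintro a b ⟨c, hc, h⟩
    refine ⟨c⁻¹, inv_ne_zero hc, ?_⟩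
    have hsc := hσne hc
    rw [map_inv₀]
    field_simp
    linear_combination -h
  have rel_trans : ∀ {a b c}, rel a b → rel b c → rel a c := by
    rintro a b c ⟨c1, h1, e1⟩ ⟨c2, h2, e2⟩
    refine ⟨c1 * c2, mul_ne_zero h1 h2, ?_⟩
    rw [_root_.map_mul]
    linear_combination c2 * e1 + σ c1 * e2
  set sd : Setoid F := ⟨rel, ⟨rel_refl, rel_symm, rel_trans⟩⟩ with hsd
  set out : Quotient sd → F := Quotient.out with hout
  -- eigenspaces as K-submodules
  set D : F → Submodule K (Fin (n + 1) → F) := fun lmb => {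
    carrier := {v | v ∈ W ∧ v ᵥ* M = lmb • fun j => σ (v j)}
    add_mem' := by
      rintro a b ⟨haW, ha⟩ ⟨hbW, hb⟩
      refine ⟨W.add_mem haW hbW, ?_⟩
      rw [Matrix.add_vecMul, ha, hb]
      funext j
      simp [mul_add]
    zero_mem' := by
      refine ⟨W.zero_mem, ?_⟩
      rw [Matrix.zero_vecMul]
      funext j
      simp
    smul_mem' := by
      rintro a v ⟨hvW, hv⟩
      have hav : a • v = (a : F) • v := rfl
      refine ⟨by rw [hav]; exact W.smul_mem _ hvW, ?_⟩
      rw [hav, Matrix.smul_vecMul, hv]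
      funext j
      have ha : σ (a : F) = (a : F) := a.2
      simp only [Pi.smul_apply, smul_eq_mul, _root_.map_mul, ha]
      ring } with hD
  have hDmem : ∀ (lmb : F) (v : Fin (n + 1) → F),
      v ∈ D lmb ↔ v ∈ W ∧ v ᵥ* M = lmb • fun j => σ (v j) := fun _ _ => Iff.rfl
  haveI : Finite (Quotient sd) := Quotient.finite sd
  haveI : Fintype (Quotient sd) := Fintype.ofFinite _
  haveI hDfin : ∀ lmb : F, Module.Finite K (D lmb) := fun lmb => Module.Finite.of_finite
  set d : Quotient sd → ℕ := fun μ => Module.finrank K (D (out μ)) with hd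
  set b : (μ : Quotient sd) → Module.Basis (Fin (d μ)) K (D (out μ)) :=
    fun μ => Module.finBasis K (D (out μ)) with hb
  set ι := (μ : Quotient sd) × Fin (d μ) with hι
  set w : ι → (Fin (n + 1) → F) := fun i => (b i.1 i.2 : Fin (n + 1) → F) with hw
  set lam : ι → F := fun i => out i.1 with hlam
  have hwmem : ∀ i : ι, w i ∈ D (lam i) := fun i => (b i.1 i.2).2
  -- vecMul injectivity
  have hMinj : ∀ v : Fin (n + 1) → F, v ᵥ* M = 0 → v = 0 := by
    intro v hv
    obtain ⟨B, hB1, _⟩ := isUnit_iff_exists.mp hM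
    calc v = v ᵥ* 1 := by rw [Matrix.vecMul_one]
      _ = (v ᵥ* M) ᵥ* B := by rw [Matrix.vecMul_vecMul, hB1]
      _ = 0 := by rw [hv, Matrix.zero_vecMul]
  have hlam0 : ∀ i : ι, lam i ≠ 0 := by
    intro i hl
    have hbot : D (lam i) = ⊥ := by
      rw [eq_bot_iff]
      rintro v ⟨_, hv⟩
      have hv0 : v ᵥ* M = 0 := by
        rw [hv, hl]
        funext j; simp
      have := hMinj v hv0
      simp [this, Submodule.mem_bot]
    have hd0 : d i.1 = 0 := by
      show Module.finrank K (D (out i.1)) = 0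
      exact Submodule.finrank_eq_zero.mpr hbot
    have hlt := i.2.isLt
    omega
  have heig : ∀ i : ι, w i ᵥ* M = lam i • fun j => σ (w i j) := fun i => (hwmem i).2
  have houtinj : Function.Injective out := Quotient.out_injective
  have hsep : ∀ i j : ι, lam i ≠ lam j → ∀ c e : F, c ≠ 0 → e ≠ 0 →
      lam i * (c * σ e) ≠ lam j * (e * σ c) := by
    intro i j hne c e hc he heq
    apply hne
    have hrel2 : rel (lam i) (lam j) := by
      refine ⟨c * e⁻¹, mul_ne_zero hc (inv_ne_zero he), ?_⟩
      rw [_root_.map_mul, map_inv₀]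
      have hse := hσne he
      field_simp
      linear_combination heq
    have hq : i.1 = j.1 := by
      have h1 : (Quotient.mk sd (lam i)) = Quotient.mk sd (lam j) := Quotient.sound hrel2
      calc i.1 = Quotient.mk sd (lam i) := (Quotient.out_eq i.1).symm
        _ = Quotient.mk sd (lam j) := h1
        _ = j.1 := Quotient.out_eq j.1
    show out i.1 = out j.1
    rw [hq]
  have hK2 : ∀ c : ι → F, (∀ i, σ (c i) = c i) →
      (∀ i j, c i ≠ 0 → c j ≠ 0 → lam i = lam j) →
      ∑ i, c i • w i = 0 → ∀ i, c i = 0 := by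
    intro c hfix hsame hsum0
    by_contra hex
    push_neg at hex
    obtain ⟨i0, hi0⟩ := hex
    have hzero : ∀ i : ι, i.1 ≠ i0.1 → c i = 0 := by
      intro i hne
      by_contra hci
      exact hne (houtinj (hsame i i0 hci hi0))
    set γ : Fin (d i0.1) → K := fun j => ⟨c ⟨i0.1, j⟩, hfix _⟩ with hγ
    have hsum2 : (∑ j : Fin (d i0.1), γ j • b i0.1 j : D (out i0.1)) = 0 := by
      have hcoe : ((∑ j : Fin (d i0.1), γ j • b i0.1 j : D (out i0.1)) : Fin (n + 1) → F)
          = ∑ j : Fin (d i0.1), c ⟨i0.1, j⟩ • w ⟨i0.1, j⟩ := by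
        rw [AddSubmonoidClass.coe_finset_sum]
        refine Finset.sum_congr rfl fun j _ => ?_
        rw [SetLike.val_smul]
        rfl
      have htot : ∑ j : Fin (d i0.1), c ⟨i0.1, j⟩ • w ⟨i0.1, j⟩ = 0 := by
        rw [← hsum0]
        rw [show (∑ i : ι, c i • w i) = ∑ μ : Quotient sd, ∑ j : Fin (d μ), c ⟨μ, j⟩ • w ⟨μ, j⟩
          from by rw [← Finset.univ_sigma_univ, Finset.sum_sigma]]
        rw [Finset.sum_eq_single i0.1]
        · intro μ _ hμ
          apply Finset.sum_eq_zero
          intro j _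
          rw [hzero ⟨μ, j⟩ hμ, zero_smul]
        · intro h
          exact absurd (Finset.mem_univ _) h
      exact Subtype.ext (by rw [hcoe, htot]; rfl)
    have hli := (b i0.1).linearIndependent
    rw [Fintype.linearIndependent_iff] at hli
    have hγ0 := hli γ hsum2 i0.2
    apply hi0
    have : c ⟨i0.1, i0.2⟩ = 0 := congrArg Subtype.val hγ0
    exact this
  have hindep := core7 σ M w lam hlam0 heig hsep hK2
  -- w is F-linearly independent, hence card ι ≤ r
  have hwW : ∀ i : ι, w i ∈ W := fun i => (hwmem i).1
  have hkr : Fintype.card ι ≤ r := by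
    have hli : LinearIndependent F (fun i : ι => (⟨w i, hwW i⟩ : W)) := by
      rw [Fintype.linearIndependent_iff]
      intro c hc
      apply hindep c
      have := congrArg (Submodule.subtype W) hc
      rw [map_sum] at this
      simpa using this
    have := hli.fintype_card_le_finrank
    rwa [hW] at this
  -- every eigenspace is inside the K-span of w
  have hsmulKF : ∀ (a : K) (v : Fin (n + 1) → F), a • v = (a : F) • v := fun _ _ => rfl
  have hDle : ∀ μ : Quotient sd, D (out μ) ≤ Submodule.span K (Set.range w) := by
    intro μ v hv
    have h1 : (⟨v, hv⟩ : D (out μ)) = ∑ j, (b μ).repr ⟨v, hv⟩ j • b μ j :=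
      ((b μ).sum_repr _).symm
    have h2 := congrArg Subtype.val h1
    rw [AddSubmonoidClass.coe_finset_sum] at h2
    have h3 : v = ∑ j, (b μ).repr ⟨v, hv⟩ j • w ⟨μ, j⟩ := by
      rw [show (∑ j, (b μ).repr ⟨v, hv⟩ j • w ⟨μ, j⟩)
          = ∑ j, ((b μ).repr ⟨v, hv⟩ j • b μ j : Fin (n + 1) → F) from
        Finset.sum_congr rfl fun j _ => rfl]
      exact h2
    rw [h3]
    exact Submodule.sum_smul_mem _ _ fun j _ => Submodule.subset_span ⟨⟨μ, j⟩, rfl⟩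
  -- every solution can be scaled into the span
  have hsol : ∀ v : Fin (n + 1) → F, v ∈ W → ∀ l : F, l ≠ 0 →
      (v ᵥ* M = l • fun j => σ (v j)) →
      ∃ e : F, e ≠ 0 ∧ e • v ∈ Submodule.span K (Set.range w) := by
    intro v hvW l hl0 hle
    have h1 : rel (out (Quotient.mk sd l)) l := Quotient.mk_out l
    obtain ⟨e, he0, hee⟩ := rel_symm h1
    refine ⟨e, he0, hDle (Quotient.mk sd l) ?_⟩
    refine ⟨W.smul_mem e hvW, ?_⟩
    rw [Matrix.smul_vecMul, hle]
    funext j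
    simp only [Pi.smul_apply, smul_eq_mul, _root_.map_mul]
    linear_combination σ (v j) * hee
  -- choice of coordinates for each projective solution point
  set P := {ξ : Projectivization F (Fin (n + 1) → F) //
      ξ.rep ∈ W ∧ ∃ l : F, l ≠ 0 ∧ ξ.rep ᵥ* M = l • (fun i => σ (ξ.rep i))} with hP
  have hchoice : ∀ x : P, ∃ (a : ι → K) (e : F), e ≠ 0 ∧
      ∑ i, a i • w i = e • x.val.rep := by
    intro x
    obtain ⟨hxW, l, hl0, hle⟩ := x.2
    obtain ⟨e, he0, hmem⟩ := hsol x.val.rep hxW l hl0 hle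
    rw [Submodule.mem_span_range_iff_exists_fun] at hmem
    obtain ⟨a, ha⟩ := hmem
    exact ⟨a, e, he0, ha⟩
  choose aa ee hee0 heqq using hchoice
  have haa0 : ∀ x : P, aa x ≠ 0 := by
    intro x hzero
    have h := heqq x
    rw [hzero] at h
    simp only [Pi.zero_apply, zero_smul, Finset.sum_const_zero] at h
    rcases smul_eq_zero.mp h.symm with h1 | h2
    · exact hee0 x h1
    · exact Projectivization.rep_nonzero x.val h2
  -- the injection into nonzero K-coordinate vectors
  have hKne : ∀ (cc : K) (a : ι → K), cc ≠ 0 → cc • a = 0 → a = 0 := by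
    intro cc a hcc h
    funext i
    have := congrFun h i
    simp only [Pi.smul_apply, smul_eq_mul, Pi.zero_apply] at this
    rcases mul_eq_zero.mp this with h1 | h2
    · exact absurd h1 hcc
    · exact h2
  have hcoene : ∀ cc : K, cc ≠ 0 → (cc : F) ≠ 0 := by
    intro cc hcc h
    exact hcc (Subtype.ext h)
  set Φ : P × {cc : K // cc ≠ 0} → {a : ι → K // a ≠ 0} := fun p =>
    ⟨p.2.val • aa p.1, fun h0 => haa0 p.1 (hKne p.2.val (aa p.1) p.2.2 h0)⟩ with hΦ
  have hsums : ∀ (x : P) (cc : K), ∑ i, (cc • aa x) i • w i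
      = ((cc : F) * ee x) • x.val.rep := by
    intro x cc
    rw [show (∑ i, (cc • aa x) i • w i) = cc • ∑ i, aa x i • w i from by
      rw [Finset.smul_sum]
      exact Finset.sum_congr rfl fun i _ => by
        rw [Pi.smul_apply, smul_eq_mul, ← smul_smul]]
    rw [heqq x, hsmulKF, smul_smul]
  have hΦinj : Function.Injective Φ := by
    rintro ⟨x, cx⟩ ⟨y, cy⟩ hxy
    have heq2 : cx.val • aa x = cy.val • aa y := congrArg Subtype.val hxy
    have hrepeq : ((cx.val : F) * ee x) • x.val.rep = ((cy.val : F) * ee y) • y.val.rep := by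
      rw [← hsums x cx.val, ← hsums y cy.val, heq2]
    have hcx : (cx.val : F) * ee x ≠ 0 := mul_ne_zero (hcoene _ cx.2) (hee0 x)
    have hcy : (cy.val : F) * ee y ≠ 0 := mul_ne_zero (hcoene _ cy.2) (hee0 y)
    have hxyv : x.val = y.val := by
      rw [← Projectivization.mk_rep x.val, ← Projectivization.mk_rep y.val,
        Projectivization.mk_eq_mk_iff]
      refine ⟨Units.mk0 (((cx.val : F) * ee x)⁻¹ * ((cy.val : F) * ee y))
        (mul_ne_zero (inv_ne_zero hcx) hcy), ?_⟩
      simp only [Units.smul_def, Units.val_mk0]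
      rw [mul_smul, ← hrepeq, ← mul_smul, inv_mul_cancel₀ hcx, one_smul]
    obtain rfl : x = y := Subtype.ext hxyv
    obtain ⟨i, hi⟩ := Function.ne_iff.mp (haa0 x)
    have h3 := congrFun heq2 i
    simp only [Pi.smul_apply, smul_eq_mul] at h3
    have h4 : cx.val = cy.val := mul_right_cancel₀ hi h3
    rw [Prod.ext_iff]
    exact ⟨rfl, Subtype.ext h4⟩
  -- cardinalities
  haveI hfinProj : Finite (Projectivization F (Fin (n + 1) → F)) := Quotient.finite _
  haveI : Finite P := Subtype.finite
  haveI : Fintype K := Fintype.ofFinite K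
  have hsK : Nat.card K = s := by
    rw [hs]
    exact Nat.card_congr (Equiv.subtypeEquivRight fun x => Iff.rfl)
  have hcard1 : Nat.card {cc : K // cc ≠ 0} = s - 1 := by
    have h1 : Fintype.card {cc : K // ¬(cc = 0)} = Fintype.card K - Fintype.card {cc : K // cc = 0} :=
      Fintype.card_subtype_compl _
    rw [Fintype.card_subtype_eq] at h1
    calc Nat.card {cc : K // cc ≠ 0} = Fintype.card {cc : K // ¬(cc = 0)} :=
          Nat.card_eq_fintype_card
      _ = Fintype.card K - 1 := h1
      _ = s - 1 := by rw [← hsK, Nat.card_eq_fintype_card]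
  have hcard2 : Nat.card {a : ι → K // a ≠ 0} = s ^ Fintype.card ι - 1 := by
    have h1 : Nat.card (ι → K) = s ^ Fintype.card ι := by
      rw [Nat.card_fun, hsK, Nat.card_eq_fintype_card]
    have h2 : Fintype.card {a : ι → K // ¬(a = 0)} = Fintype.card (ι → K) - Fintype.card {a : ι → K // a = 0} :=
      Fintype.card_subtype_compl _
    rw [Fintype.card_subtype_eq] at h2
    calc Nat.card {a : ι → K // a ≠ 0} = Fintype.card {a : ι → K // ¬(a = 0)} :=
          Nat.card_eq_fintype_card
      _ = Fintype.card (ι → K) - 1 := h2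
      _ = s ^ Fintype.card ι - 1 := by rw [← h1, Nat.card_eq_fintype_card]
  have hle1 : Nat.card (P × {cc : K // cc ≠ 0}) ≤ Nat.card {a : ι → K // a ≠ 0} :=
    Nat.card_le_card_of_injective Φ hΦinj
  rw [Nat.card_prod, hcard1, hcard2] at hle1
  have hs2 : 2 ≤ s := by
    rw [hs]
    haveI : Fintype {a : F // σ a = a} := Fintype.ofFinite _
    haveI : Nontrivial {a : F // σ a = a} :=
      ⟨⟨⟨0, map_zero σ⟩, ⟨1, map_one σ⟩, by simp [Subtype.ext_iff]⟩⟩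
    rw [Nat.card_eq_fintype_card]
    exact Fintype.one_lt_card
  have hpow : s ^ Fintype.card ι ≤ s ^ r := Nat.pow_le_pow_right (by omega) hkr
  rw [Nat.le_div_iff_mul_le (by omega : 0 < s - 1)]
  exact hle1.trans (Nat.sub_le_sub_right hpow 1)
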